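/- Let v_f > 0, k_j > 0, 0 < v_c < v_f, k_c = (v_f - v_c)·k_j/v_f, and fix an average density K with 0 < K ≤ k_c/4. Over the admissible set S_K = {(k1,k2) : 0 ≤ k1 ≤ k_j, 0 ≤ k2 ≤ k_j, k1 + k2 = 2K}, the cruising space-mean speed W(k1,k2) = (k1·G(k1) + k2·min{v_c, G(k2)})/(k1 + k2) attains its maximum value v_f(1 - 2K/k_j), and this maximum is attained at (k1, k2) = (2K, 0). -/

import Mathlib

/-- Greenshields speed at density `k`, with free-flow speed `vf` and jam density `kj`. -/
noncomputable def G (vf kj k : ℝ) : ℝ := vf * (1 - k / kj)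

/-- Two-bin network space-mean speed where all vehicles in bin 2 cruise for parking
at desired cruising speed `vc` (worst case). -/
noncomputable def W (vf kj vc k1 k2 : ℝ) : ℝ :=
  (k1 * G vf kj k1 + k2 * min vc (G vf kj k2)) / (k1 + k2)

/-- Admissible two-bin configurations at network average density `K`. -/
def SK (kj K : ℝ) : Set (ℝ × ℝ) :=
  {p | 0 ≤ p.1 ∧ p.1 ≤ kj ∧ 0 ≤ p.2 ∧ p.2 ≤ kj ∧ p.1 + p.2 = 2 * K}

/-- With cruising (worst case), for `0 < K ≤ kc/4`, the maximum of `W` over `S_K`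
is `vf (1 - 2K/kj)`, attained at `(2K, 0)`. -/
theorem cruising_upper_envelope_1 (vf kj vc K : ℝ)
    (hvf : 0 < vf) (hkj : 0 < kj) (hvc0 : 0 < vc) (hvcf : vc < vf)
    (hK0 : 0 < K) (hK : K ≤ (vf - vc) * kj / vf / 4) :
    (∀ p ∈ SK kj K, W vf kj vc p.1 p.2 ≤ vf * (1 - 2 * K / kj)) ∧
    ((2 * K, (0 : ℝ)) ∈ SK kj K ∧ W vf kj vc (2 * K) 0 = vf * (1 - 2 * K / kj)) := by
  have hkjne : kj ≠ 0 := hkj.ne'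
  have hK' : 4 * K * vf ≤ (vf - vc) * kj := by
    have h1 : K * 4 ≤ (vf - vc) * kj / vf := (le_div_iff₀ (by norm_num)).mp hK
    have h2 : K * 4 * vf ≤ (vf - vc) * kj := (le_div_iff₀ hvf).mp h1
    linarith
  have h2Kkj : 2 * K ≤ kj := by nlinarith
  constructor
  · rintro ⟨k1, k2⟩ ⟨h1, h2, h3, h4, h5⟩
    simp only at h1 h2 h3 h4 h5 ⊢
    have hsum : 0 < k1 + k2 := by rw [h5]; linarith
    rw [W, G, G, div_le_iff₀ hsum, ← h5]
    have hM : min vc (vf * (1 - k2 / kj)) ≤ vc := min_le_left _ _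
    have hbound : kj * vc ≤ vf * (kj - 2 * k1 - k2) := by nlinarith
    have hmul : k2 * (kj * vc) ≤ k2 * (vf * (kj - 2 * k1 - k2)) :=
      mul_le_mul_of_nonneg_left hbound h3
    have hmul2 : k2 * min vc (vf * (1 - k2 / kj)) ≤ k2 * vc :=
      mul_le_mul_of_nonneg_left hM h3
    rw [← mul_le_mul_iff_of_pos_left hkj]
    have e1 : kj * (k1 * (vf * (1 - k1 / kj)) + k2 * min vc (vf * (1 - k2 / kj)))
        = k1 * vf * kj - vf * k1 ^ 2 + kj * (k2 * min vc (vf * (1 - k2 / kj))) := by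
      field_simp
    have e2 : kj * (vf * (1 - (k1 + k2) / kj) * (k1 + k2))
        = vf * (kj - (k1 + k2)) * (k1 + k2) := by field_simp
    rw [e1, e2]
    nlinarith [hmul, mul_le_mul_of_nonneg_left hmul2 hkj.le]
  · have h2K : (2 : ℝ) * K ≠ 0 := by positivity
    refine ⟨⟨?_, ?_, le_refl 0, hkj.le, by ring⟩, ?_⟩
    · show (0 : ℝ) ≤ 2 * K; linarith
    · show 2 * K ≤ kj; linarith
    · rw [W, G, zero_mul, add_zero, add_zero,
        mul_div_cancel_left₀ _ h2K]
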